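/- (von Neumann trace inequality for quaternion matrices) For any A, B ∈ ℍ^{m×n} with singular values σ₁(A) ≥ … ≥ σ_s(A) and σ₁(B) ≥ … ≥ σ_s(B), where s = min(m,n), one has trace(A*B + B*A) ≤ 2 Σᵢ σᵢ(A)σᵢ(B). Here trace(A*B + B*A) is a real number. -/

import Mathlib

open Quaternion Matrix Finset

/-- The `m × n` rectangular diagonal quaternion matrix with diagonal entries
given by `σ : Fin (min m n) → ℝ`. -/
noncomputable def rectDiag (m n : ℕ) (σ : Fin (min m n) → ℝ) : Matrix (Fin m) (Fin n) ℍ[ℝ] :=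
  Matrix.of fun i j =>
    if h : (i : ℕ) = (j : ℕ) then ((σ ⟨i, lt_min i.isLt (h ▸ j.isLt)⟩ : ℝ) : ℍ[ℝ]) else 0


private lemma tele_sum (f : ℕ → ℝ) : ∀ s i : ℕ,
    ∑ k ∈ range s, (if i ≤ k then f k - f (k+1) else 0) = f (min i s) - f s := by
  intro s
  induction s with
  | zero => intro i; simp
  | succ s ih =>
    intro i
    rw [Finset.sum_range_succ, ih]
    rcases le_or_gt i s with h | h
    · have h1 : min i s = i := by omega
      have h2 : min i (s+1) = i := by omega
      rw [if_pos h, h1, h2]; ring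
    · have h1 : min i s = s := by omega
      rw [if_neg (by omega), h1]
      rcases eq_or_lt_of_le (Nat.succ_le_of_lt h) with h2 | h2
      · have h3 : min i (s+1) = s+1 := by omega
        rw [h3]; ring
      · have h3 : min i (s+1) = s+1 := by omega
        rw [h3]; ring

private lemma cnt_sum : ∀ s t : ℕ, ∑ i ∈ range s, (if i ≤ t then (1:ℝ) else 0)
    = (min (t+1) s : ℕ) := by
  intro s
  induction s with
  | zero => intro t; simp
  | succ s ih =>
    intro t
    rw [Finset.sum_range_succ, ih]
    rcases le_or_gt (t+1) s with h | h
    · have h1 : min (t+1) s = t+1 := by omega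
      have h2 : min (t+1) (s+1) = t+1 := by omega
      rw [if_neg (by omega), h1, h2]; ring
    · have h1 : min (t+1) s = s := by omega
      have h2 : min (t+1) (s+1) = s+1 := by omega
      rw [if_pos (by omega), h1, h2]; push_cast; ring
private lemma quad_swap (s : ℕ) (T : ℕ → ℕ → ℕ → ℕ → ℝ) :
    ∑ i ∈ range s, ∑ j ∈ range s, ∑ k ∈ range s, ∑ l ∈ range s, T i j k l
    = ∑ k ∈ range s, ∑ l ∈ range s, ∑ i ∈ range s, ∑ j ∈ range s, T i j k l := by
  calc ∑ i ∈ range s, ∑ j ∈ range s, ∑ k ∈ range s, ∑ l ∈ range s, T i j k l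
      = ∑ i ∈ range s, ∑ k ∈ range s, ∑ j ∈ range s, ∑ l ∈ range s, T i j k l := by
        exact Finset.sum_congr rfl fun i _ => Finset.sum_comm
    _ = ∑ k ∈ range s, ∑ i ∈ range s, ∑ j ∈ range s, ∑ l ∈ range s, T i j k l :=
        Finset.sum_comm
    _ = ∑ k ∈ range s, ∑ i ∈ range s, ∑ l ∈ range s, ∑ j ∈ range s, T i j k l :=
        Finset.sum_congr rfl fun k _ => Finset.sum_congr rfl fun i _ => Finset.sum_comm
    _ = ∑ k ∈ range s, ∑ l ∈ range s, ∑ i ∈ range s, ∑ j ∈ range s, T i j k l :=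
        Finset.sum_congr rfl fun k _ => Finset.sum_comm

private lemma substochastic_bound (s : ℕ) (f g : ℕ → ℝ) (D : ℕ → ℕ → ℝ)
    (hf : ∀ i j, i ≤ j → f j ≤ f i) (hfs : ∀ i, s ≤ i → f i = 0)
    (hg : ∀ i j, i ≤ j → g j ≤ g i) (hgs : ∀ i, s ≤ i → g i = 0)
    (hD0 : ∀ i j, 0 ≤ D i j)
    (hrow : ∀ i, ∑ j ∈ range s, D i j ≤ 1)
    (hcol : ∀ j, ∑ i ∈ range s, D i j ≤ 1) :
    ∑ i ∈ range s, ∑ j ∈ range s, f i * g j * D i j ≤ ∑ i ∈ range s, f i * g i := by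
  set a : ℕ → ℝ := fun k => f k - f (k+1) with ha
  set b : ℕ → ℝ := fun k => g k - g (k+1) with hb
  have ha0 : ∀ k, 0 ≤ a k := fun k => sub_nonneg.2 (hf k (k+1) (Nat.le_succ k))
  have hb0 : ∀ k, 0 ≤ b k := fun k => sub_nonneg.2 (hg k (k+1) (Nat.le_succ k))
  have hfi : ∀ i, f i = ∑ k ∈ range s, (if i ≤ k then a k else 0) := by
    intro i
    have h := tele_sum f s i
    rw [hfs s le_rfl, sub_zero] at h
    rw [h]
    rcases le_or_gt i s with h2 | h2
    · rw [min_eq_left h2]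
    · rw [min_eq_right h2.le, hfs s le_rfl, hfs i h2.le]
  have hgi : ∀ i, g i = ∑ k ∈ range s, (if i ≤ k then b k else 0) := by
    intro i
    have h := tele_sum g s i
    rw [hgs s le_rfl, sub_zero] at h
    rw [h]
    rcases le_or_gt i s with h2 | h2
    · rw [min_eq_left h2]
    · rw [min_eq_right h2.le, hgs s le_rfl, hgs i h2.le]
  have key : ∀ (E : ℕ → ℕ → ℝ),
      ∑ i ∈ range s, ∑ j ∈ range s, f i * g j * E i j
      = ∑ k ∈ range s, ∑ l ∈ range s, a k * b l *
          (∑ i ∈ range s, ∑ j ∈ range s,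
            (if i ≤ k then (1:ℝ) else 0) * (if j ≤ l then (1:ℝ) else 0) * E i j) := by
    intro E
    have step1 : ∑ i ∈ range s, ∑ j ∈ range s, f i * g j * E i j
        = ∑ i ∈ range s, ∑ j ∈ range s, ∑ k ∈ range s, ∑ l ∈ range s,
            (if i ≤ k then a k else 0) * (if j ≤ l then b l else 0) * E i j := by
      refine Finset.sum_congr rfl fun i _ => Finset.sum_congr rfl fun j _ => ?_
      rw [hfi i, hgi j, Finset.sum_mul, Finset.sum_mul]
      refine Finset.sum_congr rfl fun k _ => ?_
      rw [Finset.mul_sum, Finset.sum_mul]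
    rw [step1, quad_swap]
    refine Finset.sum_congr rfl fun k _ => Finset.sum_congr rfl fun l _ => ?_
    rw [Finset.mul_sum]
    refine Finset.sum_congr rfl fun i _ => ?_
    rw [Finset.mul_sum]
    refine Finset.sum_congr rfl fun j _ => ?_
    split_ifs <;> ring
  -- right-hand side via diagonal E
  have hdiag : ∑ i ∈ range s, f i * g i
      = ∑ i ∈ range s, ∑ j ∈ range s, f i * g j * (if i = j then (1:ℝ) else 0) := by
    refine Finset.sum_congr rfl fun i hi => ?_
    rw [Finset.sum_eq_single i]
    · simp
    · intro j _ hj; simp [Ne.symm hj]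
    · intro h; exact absurd hi h
  rw [hdiag, key D, key (fun i j => if i = j then (1:ℝ) else 0)]
  -- now compare coefficient-wise
  refine Finset.sum_le_sum fun k hk => Finset.sum_le_sum fun l hl => ?_
  rw [mem_range] at hk hl
  refine mul_le_mul_of_nonneg_left ?_ (mul_nonneg (ha0 k) (hb0 l))
  -- inner sums: S ≤ N
  have hN : ∑ i ∈ range s, ∑ j ∈ range s,
      (if i ≤ k then (1:ℝ) else 0) * (if j ≤ l then (1:ℝ) else 0) * (if i = j then (1:ℝ) else 0)
      = ((min (k+1) (l+1) : ℕ) : ℝ) := by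
    have h1 : ∀ i ∈ range s, ∑ j ∈ range s,
        (if i ≤ k then (1:ℝ) else 0) * (if j ≤ l then (1:ℝ) else 0) * (if i = j then (1:ℝ) else 0)
        = if i ≤ min k l then (1:ℝ) else 0 := by
      intro i hi
      rw [Finset.sum_eq_single i]
      · rw [if_pos rfl]
        by_cases hik : i ≤ k <;> by_cases hil : i ≤ l <;>
          simp [hik, hil, le_min_iff]
      · intro j _ hj; simp [Ne.symm hj]
      · intro h; exact absurd hi h
    rw [Finset.sum_congr rfl h1, cnt_sum]
    congr 1
    omega
  rw [hN]
  -- S ≤ k+1 and S ≤ l+1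
  have hb1 : ∑ i ∈ range s, ∑ j ∈ range s,
      (if i ≤ k then (1:ℝ) else 0) * (if j ≤ l then (1:ℝ) else 0) * D i j
      ≤ ((k+1 : ℕ) : ℝ) := by
    have : ∀ i ∈ range s, ∑ j ∈ range s,
        (if i ≤ k then (1:ℝ) else 0) * (if j ≤ l then (1:ℝ) else 0) * D i j
        ≤ (if i ≤ k then (1:ℝ) else 0) := by
      intro i _
      split_ifs with h
      · calc ∑ j ∈ range s, (1:ℝ) * (if j ≤ l then (1:ℝ) else 0) * D i j
            ≤ ∑ j ∈ range s, D i j := by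
              refine Finset.sum_le_sum fun j _ => ?_
              split_ifs <;> simp [hD0 i j]
          _ ≤ 1 := hrow i
      · simp
    calc _ ≤ ∑ i ∈ range s, (if i ≤ k then (1:ℝ) else 0) := Finset.sum_le_sum this
      _ = ((min (k+1) s : ℕ) : ℝ) := cnt_sum s k
      _ = ((k+1 : ℕ) : ℝ) := by congr 1; omega
  have hb2 : ∑ i ∈ range s, ∑ j ∈ range s,
      (if i ≤ k then (1:ℝ) else 0) * (if j ≤ l then (1:ℝ) else 0) * D i j
      ≤ ((l+1 : ℕ) : ℝ) := by
    rw [Finset.sum_comm]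
    have : ∀ j ∈ range s, ∑ i ∈ range s,
        (if i ≤ k then (1:ℝ) else 0) * (if j ≤ l then (1:ℝ) else 0) * D i j
        ≤ (if j ≤ l then (1:ℝ) else 0) := by
      intro j _
      split_ifs with h
      · calc ∑ i ∈ range s, (if i ≤ k then (1:ℝ) else 0) * (1:ℝ) * D i j
            ≤ ∑ i ∈ range s, D i j := by
              refine Finset.sum_le_sum fun i _ => ?_
              split_ifs <;> simp [hD0 i j]
          _ ≤ 1 := hcol j
      · simp
    calc _ ≤ ∑ j ∈ range s, (if j ≤ l then (1:ℝ) else 0) := Finset.sum_le_sum this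
      _ = ((min (l+1) s : ℕ) : ℝ) := cnt_sum s l
      _ = ((l+1 : ℕ) : ℝ) := by congr 1; omega
  rcases le_total (k+1) (l+1) with h | h
  · rw [min_eq_left h]; exact hb1
  · rw [min_eq_right h]; exact hb2


private lemma sum_castLE_le (s m : ℕ) (h : s ≤ m) (c : Fin m → ℝ) (hc : ∀ i, 0 ≤ c i) :
    ∑ k : Fin s, c (Fin.castLE h k) ≤ ∑ i, c i := by
  have h2 := Finset.sum_map univ (Fin.castLEEmb h) c
  simp only [Fin.castLEEmb_apply] at h2
  rw [← h2]
  exact Finset.sum_le_sum_of_subset_of_nonneg (Finset.subset_univ _) (fun i _ _ => hc i)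

private lemma sum_fin_cast {M : Type*} [AddCommMonoid M] {m s : ℕ} (h : s ≤ m) (F : Fin m → M)
    (h0 : ∀ i : Fin m, ¬((i:ℕ) < s) → F i = 0) :
    ∑ i, F i = ∑ k : Fin s, F (Fin.castLE h k) := by
  have h2 := Finset.sum_map univ (Fin.castLEEmb h) F
  simp only [Fin.castLEEmb_apply] at h2
  rw [← h2]
  refine (Finset.sum_subset (Finset.subset_univ _) ?_).symm
  intro i _ hi
  refine h0 i fun hlt => hi ?_
  simp only [Finset.mem_map, Finset.mem_univ, true_and]
  exact ⟨⟨i, hlt⟩, by ext; simp⟩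
private lemma rectDiag_mul_apply (m n : ℕ) (σ : Fin (min m n) → ℝ)
    (Q : Matrix (Fin n) (Fin n) ℍ[ℝ]) (i : Fin m) (j : Fin n) :
    (rectDiag m n σ * Q) i j = if h : (i:ℕ) < min m n then
      (σ ⟨i, h⟩ : ℍ[ℝ]) * Q (Fin.castLE (Nat.min_le_right m n) ⟨i, h⟩) j else 0 := by
  rw [Matrix.mul_apply]
  split_ifs with h
  · rw [Finset.sum_eq_single (Fin.castLE (Nat.min_le_right m n) ⟨i, h⟩)]
    · show dite _ _ _ * _ = _
      rw [dif_pos (show (i:ℕ) = ((Fin.castLE (Nat.min_le_right m n) ⟨i, h⟩ : Fin n):ℕ) from rfl)]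
    · intro j' _ hj'
      show dite _ _ _ * _ = 0
      rw [dif_neg, zero_mul]
      intro heq
      exact hj' (by ext; exact heq.symm)
    · intro hmem; exact absurd (Finset.mem_univ _) hmem
  · refine Finset.sum_eq_zero fun j' _ => ?_
    show dite _ _ _ * _ = 0
    rw [dif_neg, zero_mul]
    intro heq
    exact h (lt_min i.isLt (heq ▸ j'.isLt))

private lemma trace_rectDiag_conjT_mul (m n : ℕ) (σ : Fin (min m n) → ℝ)
    (W : Matrix (Fin m) (Fin n) ℍ[ℝ]) :
    Matrix.trace ((rectDiag m n σ)ᴴ * W)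
      = ∑ k : Fin (min m n), (σ k : ℍ[ℝ]) * W (Fin.castLE (Nat.min_le_left m n) k)
          (Fin.castLE (Nat.min_le_right m n) k) := by
  rw [Matrix.trace]
  have hdiag : ∀ j : Fin n, ((rectDiag m n σ)ᴴ * W).diag j
      = ∑ i : Fin m, star (rectDiag m n σ i j) * W i j := by
    intro j
    rw [Matrix.diag_apply, Matrix.mul_apply]
    exact Finset.sum_congr rfl fun i _ => by rw [Matrix.conjTranspose_apply]
  rw [Finset.sum_congr rfl fun j _ => hdiag j]
  rw [sum_fin_cast (Nat.min_le_right m n)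
    (fun j => ∑ i : Fin m, star (rectDiag m n σ i j) * W i j) ?vanish]
  case vanish =>
    intro j hj
    refine Finset.sum_eq_zero fun i _ => ?_
    show star (dite _ _ _) * _ = 0
    rw [dif_neg, star_zero, zero_mul]
    intro heq
    exact hj (heq ▸ lt_min i.isLt (heq ▸ j.isLt))
  refine Finset.sum_congr rfl fun k _ => ?_
  rw [Finset.sum_eq_single (Fin.castLE (Nat.min_le_left m n) k)]
  · show star (dite _ _ _) * _ = _
    rw [dif_pos (show ((Fin.castLE (Nat.min_le_left m n) k : Fin m):ℕ)
        = ((Fin.castLE (Nat.min_le_right m n) k : Fin n):ℕ) from rfl)]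
    rw [star_coe]
    rfl
  · intro i _ hi
    show star (dite _ _ _) * _ = 0
    rw [dif_neg, star_zero, zero_mul]
    intro heq
    exact hi (by ext; exact heq)
  · intro hmem; exact absurd (Finset.mem_univ _) hmem

private lemma qsum_re {α : Type*} (s : Finset α) (f : α → ℍ[ℝ]) :
    (∑ i ∈ s, f i).re = ∑ i ∈ s, (f i).re :=
  map_sum (QuaternionAlgebra.reₗ (-1:ℝ) (0:ℝ) (-1:ℝ)) f s

private lemma coe_mul_re (r : ℝ) (q : ℍ[ℝ]) : ((r:ℍ[ℝ]) * q).re = r * q.re := by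
  rw [coe_mul_eq_smul, re_smul]; rfl

private lemma mul_coe_mul_re (r : ℝ) (p q : ℍ[ℝ]) : (p * ((r:ℍ[ℝ]) * q)).re = r * (p*q).re := by
  rw [coe_mul_eq_smul, mul_smul_comm, re_smul]; rfl

private lemma trace_aux (m n : ℕ) (σa σb : Fin (min m n) → ℝ)
    (P : Matrix (Fin m) (Fin m) ℍ[ℝ]) (Q : Matrix (Fin n) (Fin n) ℍ[ℝ]) :
    (Matrix.trace ((rectDiag m n σa)ᴴ * (P * (rectDiag m n σb * Q)))).re
    = ∑ k : Fin (min m n), ∑ l : Fin (min m n), σa k * (σb l *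
        (P (Fin.castLE (Nat.min_le_left m n) k) (Fin.castLE (Nat.min_le_left m n) l)
          * Q (Fin.castLE (Nat.min_le_right m n) l) (Fin.castLE (Nat.min_le_right m n) k)).re) := by
  rw [trace_rectDiag_conjT_mul, qsum_re]
  refine Finset.sum_congr rfl fun k _ => ?_
  rw [coe_mul_re]
  have hW : (P * (rectDiag m n σb * Q)) (Fin.castLE (Nat.min_le_left m n) k)
        (Fin.castLE (Nat.min_le_right m n) k)
      = ∑ l : Fin (min m n), P (Fin.castLE (Nat.min_le_left m n) k)
          (Fin.castLE (Nat.min_le_left m n) l)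
          * ((σb l : ℍ[ℝ]) * Q (Fin.castLE (Nat.min_le_right m n) l)
              (Fin.castLE (Nat.min_le_right m n) k)) := by
    rw [Matrix.mul_apply]
    rw [sum_fin_cast (Nat.min_le_left m n) _ ?vanish]
    case vanish =>
      intro i hi
      rw [rectDiag_mul_apply, dif_neg hi, mul_zero]
    refine Finset.sum_congr rfl fun l _ => ?_
    rw [rectDiag_mul_apply, dif_pos (show ((Fin.castLE (Nat.min_le_left m n) l : Fin m):ℕ)
      < min m n from l.isLt)]
    rfl
  rw [hW, qsum_re, Finset.mul_sum]
  refine Finset.sum_congr rfl fun l _ => ?_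
  rw [mul_coe_mul_re]

private lemma unitary_row_sum (m : ℕ) (P : Matrix (Fin m) (Fin m) ℍ[ℝ])
    (h : P * Pᴴ = 1) (i : Fin m) : ∑ j, normSq (P i j) = 1 := by
  have h1 : (P * Pᴴ) i i = 1 := by rw [h, Matrix.one_apply_eq]
  rw [Matrix.mul_apply] at h1
  have h2 : ∑ j, ((normSq (P i j) : ℝ) : ℍ[ℝ]) = 1 := by
    rw [← h1]
    exact Finset.sum_congr rfl fun j _ => by
      rw [Matrix.conjTranspose_apply, self_mul_star]
  have h3 : (∑ j, ((normSq (P i j) : ℝ) : ℍ[ℝ])).re = (1 : ℍ[ℝ]).re := by rw [h2]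
  rwa [qsum_re, Finset.sum_congr rfl (fun j _ => re_coe _), Quaternion.re_one] at h3

private lemma unitary_col_sum (m : ℕ) (P : Matrix (Fin m) (Fin m) ℍ[ℝ])
    (h : Pᴴ * P = 1) (j : Fin m) : ∑ i, normSq (P i j) = 1 := by
  have h1 : (Pᴴ * P) j j = 1 := by rw [h, Matrix.one_apply_eq]
  rw [Matrix.mul_apply] at h1
  have h2 : ∑ i, ((normSq (P i j) : ℝ) : ℍ[ℝ]) = 1 := by
    rw [← h1]
    exact Finset.sum_congr rfl fun i _ => by
      rw [Matrix.conjTranspose_apply, star_mul_self]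
  have h3 : (∑ i, ((normSq (P i j) : ℝ) : ℍ[ℝ])).re = (1 : ℍ[ℝ]).re := by rw [h2]
  rwa [qsum_re, Finset.sum_congr rfl (fun i _ => re_coe _), Quaternion.re_one] at h3

private lemma re_mul_le (p q : ℍ[ℝ]) : (p * q).re ≤ (normSq p + normSq q) / 2 := by
  have h1 : (p * q).re ≤ ‖p‖ * ‖q‖ := by
    have h : (p * q).re = inner ℝ p (star q) := by rw [inner_def, star_star]
    rw [h]
    calc (inner ℝ p (star q) : ℝ) ≤ ‖p‖ * ‖star q‖ := real_inner_le_norm p (star q)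
      _ = ‖p‖ * ‖q‖ := by rw [Quaternion.norm_star]
  refine h1.trans ?_
  rw [normSq_eq_norm_mul_self, normSq_eq_norm_mul_self]
  nlinarith [norm_nonneg p, norm_nonneg q, sq_nonneg (‖p‖ - ‖q‖)]

private lemma trace_re_le (m n : ℕ) (σa σb : Fin (min m n) → ℝ)
    (hσa : ∀ i j, i ≤ j → σa j ≤ σa i) (hσann : ∀ i, 0 ≤ σa i)
    (hσb : ∀ i j, i ≤ j → σb j ≤ σb i) (hσbnn : ∀ i, 0 ≤ σb i)
    (P : Matrix (Fin m) (Fin m) ℍ[ℝ]) (Q : Matrix (Fin n) (Fin n) ℍ[ℝ])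
    (hP1 : P * Pᴴ = 1) (hP2 : Pᴴ * P = 1) (hQ1 : Q * Qᴴ = 1) (hQ2 : Qᴴ * Q = 1) :
    (Matrix.trace ((rectDiag m n σa)ᴴ * (P * (rectDiag m n σb * Q)))).re
      ≤ ∑ i, σa i * σb i := by
  rw [trace_aux]
  set em : Fin (min m n) → Fin m := Fin.castLE (Nat.min_le_left m n) with hem
  set en : Fin (min m n) → Fin n := Fin.castLE (Nat.min_le_right m n) with hen
  set D : Fin (min m n) → Fin (min m n) → ℝ := fun k l =>
    (normSq (P (em k) (em l)) + normSq (Q (en l) (en k))) / 2 with hD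
  have step1 : ∑ k : Fin (min m n), ∑ l : Fin (min m n), σa k * (σb l * (P (em k) (em l) * Q (en l) (en k)).re)
      ≤ ∑ k : Fin (min m n), ∑ l : Fin (min m n), σa k * σb l * D k l := by
    refine Finset.sum_le_sum fun k _ => Finset.sum_le_sum fun l _ => ?_
    rw [← mul_assoc]
    exact mul_le_mul_of_nonneg_left (re_mul_le _ _)
      (mul_nonneg (hσann k) (hσbnn l))
  refine step1.trans ?_
  -- move to ℕ-indexed sums
  set f : ℕ → ℝ := fun i => if h : i < (min m n) then σa ⟨i, h⟩ else 0 with hf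
  set g : ℕ → ℝ := fun i => if h : i < (min m n) then σb ⟨i, h⟩ else 0 with hg
  set D' : ℕ → ℕ → ℝ := fun i j =>
    if hi : i < (min m n) then if hj : j < (min m n) then D ⟨i, hi⟩ ⟨j, hj⟩ else 0 else 0 with hD'
  have hDnn : ∀ k l, 0 ≤ D k l := fun k l =>
    div_nonneg (add_nonneg (normSq_nonneg) (normSq_nonneg)) (by norm_num)
  have hrowD : ∀ k : Fin (min m n), ∑ l : Fin (min m n), D k l ≤ 1 := by
    intro k
    have e1 : ∑ l : Fin (min m n), normSq (P (em k) (em l)) ≤ 1 := by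
      have := sum_castLE_le (min m n) m (Nat.min_le_left m n)
        (fun j => normSq (P (em k) j)) (fun j => normSq_nonneg)
      exact this.trans_eq (unitary_row_sum m P hP1 (em k))
    have e2 : ∑ l : Fin (min m n), normSq (Q (en l) (en k)) ≤ 1 := by
      have := sum_castLE_le (min m n) n (Nat.min_le_right m n)
        (fun j => normSq (Q j (en k))) (fun j => normSq_nonneg)
      exact this.trans_eq (unitary_col_sum n Q hQ2 (en k))
    calc ∑ l : Fin (min m n), D k l
        = ((∑ l : Fin (min m n), normSq (P (em k) (em l)))
            + ∑ l : Fin (min m n), normSq (Q (en l) (en k))) / 2 := by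
          rw [← Finset.sum_add_distrib, ← Finset.sum_div]
      _ ≤ (1 + 1) / 2 := by linarith
      _ = 1 := by norm_num
  have hcolD : ∀ l : Fin (min m n), ∑ k : Fin (min m n), D k l ≤ 1 := by
    intro l
    have e1 : ∑ k : Fin (min m n), normSq (P (em k) (em l)) ≤ 1 := by
      have := sum_castLE_le (min m n) m (Nat.min_le_left m n)
        (fun i => normSq (P i (em l))) (fun i => normSq_nonneg)
      exact this.trans_eq (unitary_col_sum m P hP2 (em l))
    have e2 : ∑ k : Fin (min m n), normSq (Q (en l) (en k)) ≤ 1 := by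
      have := sum_castLE_le (min m n) n (Nat.min_le_right m n)
        (fun j => normSq (Q (en l) j)) (fun j => normSq_nonneg)
      exact this.trans_eq (unitary_row_sum n Q hQ1 (en l))
    calc ∑ k : Fin (min m n), D k l
        = ((∑ k : Fin (min m n), normSq (P (em k) (em l)))
            + ∑ k : Fin (min m n), normSq (Q (en l) (en k))) / 2 := by
          rw [← Finset.sum_add_distrib, ← Finset.sum_div]
      _ ≤ (1 + 1) / 2 := by linarith
      _ = 1 := by norm_num
  have main := substochastic_bound (min m n) f g D'
    (fun i j hij => by
      simp only [hf]
      by_cases hj : j < (min m n)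
      · rw [dif_pos hj, dif_pos (lt_of_le_of_lt hij hj)]
        exact hσa _ _ hij
      · rw [dif_neg hj]
        by_cases hi : i < (min m n)
        · rw [dif_pos hi]; exact hσann _
        · rw [dif_neg hi])
    (fun i hi => by simp only [hf]; exact dif_neg (by omega))
    (fun i j hij => by
      simp only [hg]
      by_cases hj : j < (min m n)
      · rw [dif_pos hj, dif_pos (lt_of_le_of_lt hij hj)]
        exact hσb _ _ hij
      · rw [dif_neg hj]
        by_cases hi : i < (min m n)
        · rw [dif_pos hi]; exact hσbnn _
        · rw [dif_neg hi])
    (fun i hi => by simp only [hg]; exact dif_neg (by omega))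
    (fun i j => by
      simp only [hD']
      by_cases hi : i < (min m n)
      · rw [dif_pos hi]
        by_cases hj : j < (min m n)
        · rw [dif_pos hj]; exact hDnn _ _
        · rw [dif_neg hj]
      · rw [dif_neg hi])
    (fun i => by
      by_cases hi : i < (min m n)
      · have : ∑ j ∈ range (min m n), D' i j = ∑ l : Fin (min m n), D ⟨i, hi⟩ l := by
          rw [← Fin.sum_univ_eq_sum_range]
          refine Finset.sum_congr rfl fun l _ => ?_
          simp only [hD']
          rw [dif_pos hi, dif_pos l.isLt]
        rw [this]
        exact hrowD _
      · have : ∑ j ∈ range (min m n), D' i j = 0 := by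
          refine Finset.sum_eq_zero fun j _ => ?_
          simp only [hD']
          rw [dif_neg hi]
        rw [this]; norm_num)
    (fun j => by
      by_cases hj : j < (min m n)
      · have : ∑ i ∈ range (min m n), D' i j = ∑ k : Fin (min m n), D k ⟨j, hj⟩ := by
          rw [← Fin.sum_univ_eq_sum_range]
          refine Finset.sum_congr rfl fun k _ => ?_
          simp only [hD']
          rw [dif_pos k.isLt, dif_pos hj]
        rw [this]
        exact hcolD _
      · have : ∑ i ∈ range (min m n), D' i j = 0 := by
          refine Finset.sum_eq_zero fun i _ => ?_
          simp only [hD']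
          by_cases hi : i < (min m n)
          · rw [dif_pos hi, dif_neg hj]
          · rw [dif_neg hi]
        rw [this]; norm_num)
  -- translate main to Fin sums
  have lhs_eq : ∑ i ∈ range (min m n), ∑ j ∈ range (min m n), f i * g j * D' i j
      = ∑ k : Fin (min m n), ∑ l : Fin (min m n), σa k * σb l * D k l := by
    rw [← Fin.sum_univ_eq_sum_range]
    refine Finset.sum_congr rfl fun k _ => ?_
    rw [← Fin.sum_univ_eq_sum_range]
    refine Finset.sum_congr rfl fun l _ => ?_
    simp only [hf, hg, hD']
    rw [dif_pos k.isLt, dif_pos l.isLt, dif_pos k.isLt, dif_pos l.isLt]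
  have rhs_eq : ∑ i ∈ range (min m n), f i * g i = ∑ i : Fin (min m n), σa i * σb i := by
    rw [← Fin.sum_univ_eq_sum_range]
    refine Finset.sum_congr rfl fun i _ => ?_
    simp only [hf, hg]
    rw [dif_pos i.isLt, dif_pos i.isLt]
  rw [lhs_eq, rhs_eq] at main
  exact main

private lemma re_mul_comm (p q : ℍ[ℝ]) : (p * q).re = (q * p).re := by
  rw [re_mul, re_mul]; ring

private lemma trace_mul_re_comm {a b : ℕ} (M : Matrix (Fin a) (Fin b) ℍ[ℝ])
    (N : Matrix (Fin b) (Fin a) ℍ[ℝ]) :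
    (Matrix.trace (M * N)).re = (Matrix.trace (N * M)).re := by
  have h1 : (Matrix.trace (M * N)).re = ∑ i, ∑ j, (M i j * N j i).re := by
    rw [Matrix.trace, qsum_re]
    refine Finset.sum_congr rfl fun i _ => ?_
    rw [Matrix.diag_apply, Matrix.mul_apply, qsum_re]
  have h2 : (Matrix.trace (N * M)).re = ∑ j, ∑ i, (N j i * M i j).re := by
    rw [Matrix.trace, qsum_re]
    refine Finset.sum_congr rfl fun j _ => ?_
    rw [Matrix.diag_apply, Matrix.mul_apply, qsum_re]
  rw [h1, h2, Finset.sum_comm]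
  exact Finset.sum_congr rfl fun j _ => Finset.sum_congr rfl fun i _ => re_mul_comm _ _

/-- von Neumann type trace inequality for quaternion matrices:
`trace(A*B + B*A) ≤ 2 ∑ᵢ σᵢ(A) σᵢ(B)`, where the singular values are given
by quaternionic SVDs of `A` and `B`. -/
theorem quaternion_von_neumann_trace_inequality (m n : ℕ)
    (A B : Matrix (Fin m) (Fin n) ℍ[ℝ])
    (U X : Matrix (Fin m) (Fin m) ℍ[ℝ]) (V Y : Matrix (Fin n) (Fin n) ℍ[ℝ])
    (σA σB : Fin (min m n) → ℝ)
    (hU : Uᴴ * U = 1 ∧ U * Uᴴ = 1) (hV : Vᴴ * V = 1 ∧ V * Vᴴ = 1)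
    (hX : Xᴴ * X = 1 ∧ X * Xᴴ = 1) (hY : Yᴴ * Y = 1 ∧ Y * Yᴴ = 1)
    (hσA : ∀ i j, i ≤ j → σA j ≤ σA i) (hσAnn : ∀ i, 0 ≤ σA i)
    (hσB : ∀ i j, i ≤ j → σB j ≤ σB i) (hσBnn : ∀ i, 0 ≤ σB i)
    (hA : A = U * rectDiag m n σA * Vᴴ)
    (hB : B = X * rectDiag m n σB * Yᴴ) :
    (Matrix.trace (Aᴴ * B + Bᴴ * A)).re ≤ 2 * ∑ i, σA i * σB i := by
  have hP1 : (Uᴴ * X) * (Uᴴ * X)ᴴ = 1 := by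
    rw [Matrix.conjTranspose_mul, Matrix.conjTranspose_conjTranspose, Matrix.mul_assoc,
      ← Matrix.mul_assoc X, hX.2, Matrix.one_mul, hU.1]
  have hP2 : (Uᴴ * X)ᴴ * (Uᴴ * X) = 1 := by
    rw [Matrix.conjTranspose_mul, Matrix.conjTranspose_conjTranspose, Matrix.mul_assoc,
      ← Matrix.mul_assoc U, hU.2, Matrix.one_mul, hX.1]
  have hQ1 : (Yᴴ * V) * (Yᴴ * V)ᴴ = 1 := by
    rw [Matrix.conjTranspose_mul, Matrix.conjTranspose_conjTranspose, Matrix.mul_assoc,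
      ← Matrix.mul_assoc V, hV.2, Matrix.one_mul, hY.1]
  have hQ2 : (Yᴴ * V)ᴴ * (Yᴴ * V) = 1 := by
    rw [Matrix.conjTranspose_mul, Matrix.conjTranspose_conjTranspose, Matrix.mul_assoc,
      ← Matrix.mul_assoc Y, hY.2, Matrix.one_mul, hV.1]
  have hP1' : (Xᴴ * U) * (Xᴴ * U)ᴴ = 1 := by
    rw [Matrix.conjTranspose_mul, Matrix.conjTranspose_conjTranspose, Matrix.mul_assoc,
      ← Matrix.mul_assoc U, hU.2, Matrix.one_mul, hX.1]
  have hP2' : (Xᴴ * U)ᴴ * (Xᴴ * U) = 1 := by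
    rw [Matrix.conjTranspose_mul, Matrix.conjTranspose_conjTranspose, Matrix.mul_assoc,
      ← Matrix.mul_assoc X, hX.2, Matrix.one_mul, hU.1]
  have hQ1' : (Vᴴ * Y) * (Vᴴ * Y)ᴴ = 1 := by
    rw [Matrix.conjTranspose_mul, Matrix.conjTranspose_conjTranspose, Matrix.mul_assoc,
      ← Matrix.mul_assoc Y, hY.2, Matrix.one_mul, hV.1]
  have hQ2' : (Vᴴ * Y)ᴴ * (Vᴴ * Y) = 1 := by
    rw [Matrix.conjTranspose_mul, Matrix.conjTranspose_conjTranspose, Matrix.mul_assoc,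
      ← Matrix.mul_assoc V, hV.2, Matrix.one_mul, hY.1]
  have htr1 : (Matrix.trace (Aᴴ * B)).re
      = (Matrix.trace ((rectDiag m n σA)ᴴ * ((Uᴴ * X) * (rectDiag m n σB * (Yᴴ * V))))).re := by
    have hab : Aᴴ * B = V * ((rectDiag m n σA)ᴴ * (Uᴴ * (X * (rectDiag m n σB * Yᴴ)))) := by
      rw [hA, hB]
      simp only [Matrix.conjTranspose_mul, Matrix.conjTranspose_conjTranspose, Matrix.mul_assoc]
    rw [hab, trace_mul_re_comm]
    congr 2
    simp only [Matrix.mul_assoc]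
    rfl
  have htr2 : (Matrix.trace (Bᴴ * A)).re
      = (Matrix.trace ((rectDiag m n σB)ᴴ * ((Xᴴ * U) * (rectDiag m n σA * (Vᴴ * Y))))).re := by
    have hba : Bᴴ * A = Y * ((rectDiag m n σB)ᴴ * (Xᴴ * (U * (rectDiag m n σA * Vᴴ)))) := by
      rw [hA, hB]
      simp only [Matrix.conjTranspose_mul, Matrix.conjTranspose_conjTranspose, Matrix.mul_assoc]
    rw [hba, trace_mul_re_comm]
    congr 2
    simp only [Matrix.mul_assoc]
    rfl
  have h1 := trace_re_le m n σA σB hσA hσAnn hσB hσBnn (Uᴴ * X) (Yᴴ * V) hP1 hP2 hQ1 hQ2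
  have h2 := trace_re_le m n σB σA hσB hσBnn hσA hσAnn (Xᴴ * U) (Vᴴ * Y) hP1' hP2' hQ1' hQ2'
  rw [Matrix.trace_add, Quaternion.re_add, htr1, htr2]
  have h3 : ∑ i, σB i * σA i = ∑ i, σA i * σB i :=
    Finset.sum_congr rfl fun i _ => mul_comm _ _
  rw [h3] at h2
  linarith
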